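/- Let N ∈ ℕ and let b_1,…,b_N ∈ ℝ satisfy ∏_{i=1}^{N} (1+|b_i|) ≤ R/N for a constant R ≥ 1. Define 𝓕_i^{(n)} for i ∈ {0,1,…,N−1} and n ∈ ℤ_{≥0} by 𝓕_i^{(n)} = δ_{n,i} (Kronecker delta) if n ≤ N−1, and 𝓕_i^{(n)} = ∑_{r=1}^{N} (−1)^{r+1} 𝒞_r^N 𝓕_i^{(n−r)} otherwise. Then |𝓕_i^{(n)}| ≤ R^n for all i ∈ {0,1,…,N−1} and all n ∈ ℤ_{≥0}. -/

import Mathlib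

/-- `calC N b r` is the coefficient of `t^(N-r)` in the polynomial `∏_{i=1}^N (t + b i)`,
i.e. the `r`-th elementary symmetric polynomial of `b_1, …, b_N`. -/
noncomputable def calC (N : ℕ) (b : Fin N → ℝ) (r : ℕ) : ℝ :=
  (∏ i, (Polynomial.X + Polynomial.C (b i))).coeff (N - r)

/-- `calF N b i n` is `𝓕_i^{(n)}`: the Kronecker delta `δ_{n,i}` if `n ≤ N−1`, and
`∑_{r=1}^N (−1)^{r+1} 𝒞_r^N 𝓕_i^{(n−r)}` otherwise. -/
noncomputable def calF (N : ℕ) (b : Fin N → ℝ) (i : ℕ) : ℕ → ℝ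
  | n =>
    if _h : n < N then (if n = i then 1 else 0)
    else
      ∑ r ∈ (Finset.Icc 1 N).attach,
        (-1 : ℝ) ^ ((r : ℕ) + 1) * calC N b r * calF N b i (n - r)
  termination_by n => n
  decreasing_by
    have h1 := Finset.mem_Icc.mp r.2
    omega

theorem statement8 (N : ℕ) (b : Fin N → ℝ) (R : ℝ) (hR : 1 ≤ R)
    (hb : ∏ i, (1 + |b i|) ≤ R / N) :
    ∀ i < N, ∀ n : ℕ, |calF N b i n| ≤ R ^ n := by
  have hR0 : (0:ℝ) < R := lt_of_lt_of_le one_pos hR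
  -- bound on the sum of |calC|
  have hCr : ∀ r ∈ Finset.Icc 1 N, |calC N b r| ≤
      ∑ t ∈ Finset.powersetCard r (Finset.univ : Finset (Fin N)), ∏ i ∈ t, |b i| := by
    intro r hr
    obtain ⟨hr1, hrN⟩ := Finset.mem_Icc.mp hr
    have hk : N - r ≤ (Finset.univ : Finset (Fin N)).card := by
      simp only [Finset.card_univ, Fintype.card_fin]; omega
    have := Finset.prod_X_add_C_coeff (Finset.univ : Finset (Fin N)) b hk
    have hcard : (Finset.univ : Finset (Fin N)).card - (N - r) = r := by
      simp only [Finset.card_univ, Fintype.card_fin]; omega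
    rw [calC, this, hcard]
    calc |∑ t ∈ Finset.powersetCard r (Finset.univ : Finset (Fin N)), ∏ i ∈ t, b i|
        ≤ ∑ t ∈ Finset.powersetCard r (Finset.univ : Finset (Fin N)), |∏ i ∈ t, b i| :=
          Finset.abs_sum_le_sum_abs _ _
      _ ≤ _ := by
          apply Finset.sum_le_sum
          intro t _
          rw [Finset.abs_prod]
  have hEsum : ∑ r ∈ Finset.range (N+1),
      ∑ t ∈ Finset.powersetCard r (Finset.univ : Finset (Fin N)), ∏ i ∈ t, |b i|
      = ∏ i, (1 + |b i|) := by
    have h1 : ∏ i : Fin N, (|b i| + 1) =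
        ∑ t ∈ (Finset.univ : Finset (Fin N)).powerset,
          (∏ i ∈ t, |b i|) * ∏ i ∈ Finset.univ \ t, (1:ℝ) := Finset.prod_add _ _ _
    simp only [Finset.prod_const_one, mul_one] at h1
    rw [show (fun i => 1 + |b i|) = (fun i => |b i| + 1) by funext i; ring, h1,
      Finset.sum_powerset]
    simp [Finset.card_univ]
  have hCsum : ∑ r ∈ Finset.Icc 1 N, |calC N b r| ≤ ∏ i, (1 + |b i|) := by
    calc ∑ r ∈ Finset.Icc 1 N, |calC N b r|
        ≤ ∑ r ∈ Finset.Icc 1 N,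
            ∑ t ∈ Finset.powersetCard r (Finset.univ : Finset (Fin N)), ∏ i ∈ t, |b i| :=
          Finset.sum_le_sum hCr
      _ ≤ ∑ r ∈ Finset.range (N+1),
            ∑ t ∈ Finset.powersetCard r (Finset.univ : Finset (Fin N)), ∏ i ∈ t, |b i| := by
          apply Finset.sum_le_sum_of_subset_of_nonneg
          · intro x hx
            simp only [Finset.mem_Icc] at hx
            simp only [Finset.mem_range]; omega
          · intro x _ _
            exact Finset.sum_nonneg fun t _ =>
              Finset.prod_nonneg fun i _ => abs_nonneg _
      _ = ∏ i, (1 + |b i|) := hEsum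
  intro i hi n
  induction n using Nat.strong_induction_on with
  | _ n ih =>
    rw [calF]
    by_cases hn : n < N
    · simp only [hn, dif_pos]
      rcases eq_or_ne n i with hni | hni
      · rw [if_pos hni, abs_one]
        exact one_le_pow₀ hR
      · rw [if_neg hni, abs_zero]
        positivity
    · simp only [hn, dif_neg, not_false_iff]
      have hN1 : 1 ≤ N := by omega
      have hn1 : 1 ≤ n := le_trans hN1 (not_lt.mp hn)
      calc |∑ r ∈ (Finset.Icc 1 N).attach,
              (-1 : ℝ) ^ ((r : ℕ) + 1) * calC N b r * calF N b i (n - r)|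
          ≤ ∑ r ∈ (Finset.Icc 1 N).attach,
              |(-1 : ℝ) ^ ((r : ℕ) + 1) * calC N b r * calF N b i (n - r)| :=
            Finset.abs_sum_le_sum_abs _ _
        _ ≤ ∑ r ∈ (Finset.Icc 1 N).attach, |calC N b r| * R ^ (n - 1) := by
            apply Finset.sum_le_sum
            intro r _
            obtain ⟨hr1, hrN⟩ := Finset.mem_Icc.mp r.2
            rw [abs_mul, abs_mul, abs_pow, abs_neg, abs_one, one_pow, one_mul]
            have hF : |calF N b i (n - (r:ℕ))| ≤ R ^ (n - (r:ℕ)) := ih _ (by omega)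
            have hpow : R ^ (n - (r:ℕ)) ≤ R ^ (n - 1) :=
              pow_le_pow_right₀ hR (by omega)
            exact mul_le_mul_of_nonneg_left (le_trans hF hpow) (abs_nonneg _)
        _ = (∑ r ∈ Finset.Icc 1 N, |calC N b r|) * R ^ (n - 1) := by
            rw [← Finset.sum_mul]
            exact congrArg (· * R ^ (n - 1))
              (Finset.sum_attach (Finset.Icc 1 N) fun r => |calC N b r|)
        _ ≤ R * R ^ (n - 1) := by
            apply mul_le_mul_of_nonneg_right _ (by positivity)
            calc ∑ r ∈ Finset.Icc 1 N, |calC N b r| ≤ ∏ i, (1 + |b i|) := hCsum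
              _ ≤ R / N := hb
              _ ≤ R := by
                  rw [div_le_iff₀ (by exact_mod_cast hN1)]
                  nlinarith [(show (1:ℝ) ≤ N by exact_mod_cast hN1)]
        _ = R ^ n := by
            rw [← pow_succ']
            congr 1
            omega
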